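/- For n ≥ 2 and every x ∈ Δ^{n-1}, the extropy satisfies H(1−x) ≤ (n−1) log(n/(n−1)), with equality if and only if x = (1/n, …, 1/n). -/

import Mathlib

open Finset

/-- Extropy `H(1-x) = -∑ (1-xᵢ) log(1-xᵢ)` (with `0 log 0 = 0`). -/
noncomputable def extropy {n : ℕ} (x : Fin n → ℝ) : ℝ :=
  -∑ i, (1 - x i) * Real.log (1 - x i)

/-- For `n ≥ 2` and `x ∈ Δ^{n-1}`, the extropy satisfies
`H(1−x) ≤ (n−1) log(n/(n−1))`, with equality iff `x` is uniform. -/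
theorem extropy_le_max (n : ℕ) (hn : 2 ≤ n) (x : Fin n → ℝ)
    (hx : ∀ i, 0 ≤ x i) (hxsum : ∑ i, x i = 1) :
    extropy x ≤ ((n : ℝ) - 1) * Real.log ((n : ℝ) / ((n : ℝ) - 1)) ∧
    (extropy x = ((n : ℝ) - 1) * Real.log ((n : ℝ) / ((n : ℝ) - 1)) ↔
      x = (fun _ => (1 : ℝ) / n)) := by
  have hN2 : (2:ℝ) ≤ (n:ℝ) := by exact_mod_cast hn
  have hN1 : (1:ℝ) ≤ (n:ℝ) - 1 := by linarith
  have hNpos : (0:ℝ) < n := by linarith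
  have hNne : (n:ℝ) ≠ 0 := ne_of_gt hNpos
  have hN1ne : (n:ℝ) - 1 ≠ 0 := by linarith
  have hxle : ∀ i, x i ≤ 1 := by
    intro i
    rw [← hxsum]
    exact Finset.single_le_sum (fun j _ => hx j) (mem_univ i)
  have hmem : ∀ i ∈ (univ : Finset (Fin n)), (1 - x i) ∈ Set.Ici (0:ℝ) := by
    intro i _
    simp only [Set.mem_Ici, sub_nonneg]
    exact hxle i
  set w : Fin n → ℝ := fun _ => (n:ℝ)⁻¹ with hw
  have hw0 : ∀ i ∈ (univ : Finset (Fin n)), 0 < w i := fun i _ => by positivity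
  have hw1 : ∑ i, w i = 1 := by
    simp [hw, Finset.card_univ]
    exact mul_inv_cancel₀ hNne
  have hsum1 : ∑ i, (1 - x i) = (n:ℝ) - 1 := by
    rw [Finset.sum_sub_distrib, hxsum]
    simp [Finset.card_univ]
  have hcent : ∑ i, w i • (1 - x i) = ((n:ℝ) - 1) / n := by
    simp only [smul_eq_mul, hw, ← Finset.mul_sum, hsum1]
    rw [inv_mul_eq_div]
  have hex : extropy x = ∑ i, Real.negMulLog (1 - x i) := by
    unfold extropy Real.negMulLog
    rw [← Finset.sum_neg_distrib]
    exact Finset.sum_congr rfl (fun i _ => by ring)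
  have hexw : ∑ i, w i • Real.negMulLog (1 - x i) = (n:ℝ)⁻¹ * extropy x := by
    simp only [smul_eq_mul, hw, ← Finset.mul_sum, hex]
  have hval : Real.negMulLog (((n:ℝ) - 1) / n)
      = (n:ℝ)⁻¹ * (((n:ℝ) - 1) * Real.log ((n:ℝ) / ((n:ℝ) - 1))) := by
    rw [Real.negMulLog, Real.log_div hN1ne hNne, Real.log_div hNne hN1ne]
    field_simp
    ring
  constructor
  · have hjen := Real.concaveOn_negMulLog.le_map_sum
      (fun i hi => (hw0 i hi).le) hw1 hmem
    rw [hcent, hexw, hval] at hjen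
    have := mul_le_mul_of_nonneg_left hjen hNpos.le
    rw [← mul_assoc, ← mul_assoc, mul_inv_cancel₀ hNne, one_mul, one_mul] at this
    exact this
  · have hiff := Real.strictConcaveOn_negMulLog.map_sum_eq_iff hw0 hw1 hmem
    rw [hcent, hexw, hval] at hiff
    constructor
    · intro h
      funext j
      have : 1 - x j = ((n:ℝ) - 1) / n := by
        exact hiff.mp (by rw [h]) j (mem_univ j)
      have : x j = 1 - ((n:ℝ) - 1) / n := by linarith
      rw [this]
      field_simp
      ring
    · intro h
      have heq : (n:ℝ)⁻¹ * (((n:ℝ) - 1) * Real.log ((n:ℝ) / ((n:ℝ) - 1)))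
          = (n:ℝ)⁻¹ * extropy x := by
        apply hiff.mpr
        intro j _
        rw [h]
        field_simp
      have := mul_left_cancel₀ (inv_ne_zero hNne) heq
      exact this.symm
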